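/- If a countable structure M has an AZ-enumeration, then M is ω-categorical. -/

import Mathlib

open FirstOrder Cardinal

open FirstOrder.Language FirstOrder.Language.Structure


set_option linter.unusedSectionVars false
namespace AZtmp

universe u v w w'

variable {L : FirstOrder.Language.{u, v}} {M : Type w} [L.Structure M]

/-- The quantifier-free-variable type of a tuple: the set of formulas it realizes. -/
def typ (m : ℕ) (a : Fin m → M) : Set (L.BoundedFormula Empty m) :=
  {φ | φ.Realize default a}

theorem mem_typ {m : ℕ} {a : Fin m → M} {φ : L.BoundedFormula Empty m} :
    φ ∈ typ m a ↔ φ.Realize default a := Iff.rfl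

theorem not_mem_typ {m : ℕ} {a : Fin m → M} {φ : L.BoundedFormula Empty m} :
    φ ∉ typ m a ↔ φ.not ∈ typ m a := by
  simp [mem_typ, BoundedFormula.realize_not]

/-- Separation of distinct types by a formula. -/
theorem sep {m : ℕ} {u v : Fin m → M} (h : typ (L := L) m u ≠ typ m v) :
    ∃ θ : L.BoundedFormula Empty m, θ ∈ typ m u ∧ θ ∉ typ m v := by
  have : ∃ θ : L.BoundedFormula Empty m, ¬ (θ ∈ typ m u ↔ θ ∈ typ m v) := by
    by_contra hc
    push_neg at hc
    exact h (Set.ext fun θ => hc θ)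
  obtain ⟨θ, hθ⟩ := this
  by_cases h1 : θ ∈ typ m u
  · exact ⟨θ, h1, fun h2 => hθ ⟨fun _ => h2, fun _ => h1⟩⟩
  · refine ⟨θ.not, not_mem_typ.1 h1, ?_⟩
    rw [← not_mem_typ] at *
    intro h2
    exact hθ ⟨fun h3 => (h1 h3).elim, fun h3 => (h2 h3).elim⟩


theorem typ_finite [Infinite M] (e : M ≃ ℕ)
    (hAZ : ∀ n : ℕ, 1 ≤ n → ∀ b : ℕ → Fin n → M, ∃ i j : ℕ, i < j ∧
      ∃ f : M ↪ₑ[L] M, (∀ x y : M, e x < e y → e (f x) < e (f y)) ∧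
        ∀ k : Fin n, f (b i k) = b j k) (m : ℕ) :
    (Set.range (typ (L := L) (M := M) m)).Finite := by
  rcases Nat.eq_zero_or_pos m with hm | hm
  · subst hm
    apply Set.Subsingleton.finite
    rintro p ⟨a, rfl⟩ q ⟨b, rfl⟩
    exact congrArg (typ 0) (Subsingleton.elim a b)
  · by_contra hinf
    rw [Set.not_infinite.symm, not_not] at hinf
    have g := hinf.natEmbedding
    have hchoice := fun i => (g i).2
    simp only [Set.mem_range] at hchoice
    choose b hb using hchoice
    obtain ⟨i, j, hij, f, -, hf⟩ := hAZ m hm b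
    have key : typ (L := L) m (b i) = typ m (b j) := by
      ext φ
      have h1 : (fun k => f (b i k)) = b j := funext hf
      have h2 : (f : M → M) ∘ (default : Empty → M) = default := Subsingleton.elim _ _
      rw [mem_typ, mem_typ, ← h1]
      have h3 := f.map_boundedFormula φ (default : Empty → M) (b i)
      rw [h2] at h3
      exact h3.symm
    have hgij : (g i : Set (L.BoundedFormula Empty m)) = (g j : Set _) := by
      rw [← hb i, ← hb j]; exact key
    have : i = j := g.injective (Subtype.ext hgij)
    omega


section Transfer

variable [Nonempty M] {N : Type w'} [L.Structure N]

open scoped Classical in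
/-- Choose a representative tuple of a type. -/
noncomputable def rep (m : ℕ) (p : Set (L.BoundedFormula Empty m)) : Fin m → M :=
  if h : p ∈ Set.range (typ (L := L) (M := M) m) then h.choose
  else fun _ => Classical.arbitrary M

theorem typ_rep {m : ℕ} {p : Set (L.BoundedFormula Empty m)}
    (h : p ∈ Set.range (typ (L := L) (M := M) m)) : typ m (rep (M := M) m p) = p := by
  rw [rep, dif_pos h]; exact h.choose_spec

variable (hfin : ∀ m : ℕ, (Set.range (typ (L := L) (M := M) m)).Finite)

/-- A finite set of representative tuples meeting every type. -/
noncomputable def reps (m : ℕ) : Finset (Fin m → M) :=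
  (Set.Finite.image (rep (M := M) m) (hfin m)).toFinset

theorem exists_mem_reps (m : ℕ) (w : Fin m → M) :
    ∃ u ∈ reps (M := M) hfin m, typ (L := L) m u = typ m w := by
  refine ⟨rep (M := M) m (typ m w), ?_, typ_rep (Set.mem_range_self w)⟩
  rw [reps, Set.Finite.mem_toFinset]
  exact Set.mem_image_of_mem _ (Set.mem_range_self w)

open scoped Classical in
/-- A formula separating `u` from `v` (realized by `u`, not by `v` if types differ). -/
noncomputable def sepF (m : ℕ) (u v : Fin m → M) : L.BoundedFormula Empty m :=
  if h : typ (L := L) m u ≠ typ m v then (sep h).choose else ⊤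

theorem sepF_mem (m : ℕ) (u v : Fin m → M) : sepF (L := L) m u v ∈ typ m u := by
  rw [sepF]
  split
  · next h => exact (sep h).choose_spec.1
  · exact mem_typ.2 (BoundedFormula.realize_top.2 trivial)

theorem sepF_not_mem {m : ℕ} {u v : Fin m → M} (h : typ (L := L) m u ≠ typ m v) :
    sepF (L := L) m u v ∉ typ m v := by
  rw [sepF, dif_pos h]
  exact (sep h).choose_spec.2

/-- The isolating formula of (the type of) `u`. -/
noncomputable def phi (m : ℕ) (u : Fin m → M) : L.BoundedFormula Empty m :=
  BoundedFormula.iInf (fun v : (reps (M := M) hfin m) => sepF (L := L) m u v.1)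

theorem realize_phi_self (m : ℕ) (u : Fin m → M) :
    (phi (L := L) (M := M) hfin m u).Realize default u := by
  rw [phi, BoundedFormula.realize_iInf]
  exact fun v => mem_typ.1 (sepF_mem m u v.1)

theorem typ_eq_of_realize_phi {m : ℕ} {u w : Fin m → M}
    (hw : (phi (L := L) (M := M) hfin m u).Realize default w) : typ (L := L) m w = typ m u := by
  obtain ⟨v, hv_mem, hv⟩ := exists_mem_reps hfin m w
  rw [phi, BoundedFormula.realize_iInf] at hw
  by_cases h : typ (L := L) m u = typ m v
  · rw [← hv, ← h]
  · exact absurd (hv ▸ mem_typ.2 (hw ⟨v, hv_mem⟩)) (sepF_not_mem h)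

theorem realize_phi_of_typ_eq {m : ℕ} {u w : Fin m → M}
    (h : typ (L := L) m w = typ m u) : (phi (L := L) (M := M) hfin m u).Realize default w := by
  have : phi (L := L) (M := M) hfin m u ∈ typ m w := h ▸ mem_typ.2 (realize_phi_self hfin m u)
  exact mem_typ.1 this

theorem models_alls_iff (X : Type*) [L.Structure X] {m : ℕ} (ψ : L.BoundedFormula Empty m) :
    X ⊨ ψ.alls ↔ ∀ w : Fin m → X, ψ.Realize default w :=
  BoundedFormula.realize_alls

variable (helem : ∀ σ : L.Sentence, M ⊨ σ ↔ N ⊨ σ)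

include hfin helem in
theorem key_aux {m : ℕ} {u : Fin m → M} {χ : L.BoundedFormula Empty m}
    (hχ : χ ∈ typ m u) (w : Fin m → N)
    (hw : (phi (L := L) (M := M) hfin m u).Realize default w) :
    χ.Realize default w := by
  have hM : M ⊨ ((phi (L := L) (M := M) hfin m u).imp χ).alls := by
    rw [models_alls_iff]
    intro w'
    rw [BoundedFormula.realize_imp]
    intro hw'
    have h := typ_eq_of_realize_phi hfin hw'
    exact mem_typ.1 (h ▸ hχ)
  have hN := (helem _).1 hM
  rw [models_alls_iff] at hN
  exact (BoundedFormula.realize_imp.1 (hN w)) hw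

include hfin helem in
theorem key {m : ℕ} {u : Fin m → M} {w : Fin m → N}
    (hw : (phi (L := L) (M := M) hfin m u).Realize default w)
    (χ : L.BoundedFormula Empty m) :
    χ.Realize default w ↔ χ.Realize default u := by
  by_cases hχ : χ.Realize (default : Empty → M) u
  · exact iff_of_true (key_aux hfin helem (mem_typ.2 hχ) w hw) hχ
  · refine iff_of_false ?_ hχ
    have := key_aux hfin helem (not_mem_typ.1 (fun h => hχ (mem_typ.1 h))) w hw
    rw [BoundedFormula.realize_not] at this
    exact this

variable (L M N) in
/-- Two tuples have the same type across the two structures. -/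
def ST (m : ℕ) (a : Fin m → M) (b : Fin m → N) : Prop :=
  ∀ χ : L.BoundedFormula Empty m, χ.Realize default a ↔ χ.Realize default b

include helem in
theorem ST_zero (a : Fin 0 → M) (b : Fin 0 → N) : ST L M N 0 a b := by
  intro χ
  rw [Subsingleton.elim a default, Subsingleton.elim b default]
  exact helem χ

include hfin helem in
theorem forth {m : ℕ} {a : Fin m → M} {b : Fin m → N} (hab : ST L M N m a b) (c : M) :
    ∃ d : N, ST L M N (m + 1) (Fin.snoc a c) (Fin.snoc b d) := by
  set u := rep (M := M) (m + 1) (typ (L := L) (m + 1) (Fin.snoc a c)) with hu_def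
  have hu : typ (L := L) (m + 1) u = typ (m + 1) (Fin.snoc a c) :=
    typ_rep (Set.mem_range_self _)
  have h1 : (phi (L := L) (M := M) hfin (m + 1) u).Realize default (Fin.snoc a c) :=
    realize_phi_of_typ_eq hfin hu.symm
  have h2 : ((phi (L := L) (M := M) hfin (m + 1) u).ex).Realize (default : Empty → M) a :=
    BoundedFormula.realize_ex.2 ⟨c, h1⟩
  obtain ⟨d, hd⟩ := BoundedFormula.realize_ex.1 ((hab _).1 h2)
  refine ⟨d, fun χ => ?_⟩
  calc χ.Realize default (Fin.snoc a c) ↔ χ.Realize default u :=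
        key (N := M) hfin (fun _ => Iff.rfl) h1 χ
    _ ↔ χ.Realize default (Fin.snoc b d) := (key hfin helem hd χ).symm

include hfin helem in
theorem back {m : ℕ} {a : Fin m → M} {b : Fin m → N} (hab : ST L M N m a b) (d : N) :
    ∃ c : M, ST L M N (m + 1) (Fin.snoc a c) (Fin.snoc b d) := by
  have hPhiM : M ⊨ (BoundedFormula.iSup (fun v : (reps (M := M) hfin (m + 1)) =>
      (phi (L := L) (M := M) hfin (m + 1)) v.1)).alls := by
    rw [models_alls_iff]
    intro w
    rw [BoundedFormula.realize_iSup]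
    obtain ⟨v, hv_mem, hv⟩ := exists_mem_reps hfin (m + 1) w
    exact ⟨⟨v, hv_mem⟩, realize_phi_of_typ_eq hfin hv.symm⟩
  have hPhiN := (helem _).1 hPhiM
  rw [models_alls_iff] at hPhiN
  obtain ⟨⟨u, hu_mem⟩, hu⟩ := BoundedFormula.realize_iSup.1 (hPhiN (Fin.snoc b d))
  have h2 : ((phi (L := L) (M := M) hfin (m + 1) u).ex).Realize (default : Empty → N) b :=
    BoundedFormula.realize_ex.2 ⟨d, hu⟩
  obtain ⟨c, hc⟩ := BoundedFormula.realize_ex.1 ((hab _).2 h2)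
  refine ⟨c, fun χ => ?_⟩
  calc χ.Realize default (Fin.snoc a c) ↔ χ.Realize default u :=
        key (N := M) hfin (fun _ => Iff.rfl) hc χ
    _ ↔ χ.Realize default (Fin.snoc b d) := (key hfin helem hu χ).symm

/-- One step of the back-and-forth construction. -/
noncomputable def nextState (e : M ≃ ℕ) (eN : N ≃ ℕ) (k : ℕ)
    (s : {p : (Fin k → M) × (Fin k → N) // ST L M N k p.1 p.2}) :
    {p : (Fin (k + 1) → M) × (Fin (k + 1) → N) // ST L M N (k + 1) p.1 p.2} :=
  if k % 2 = 0 then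
    ⟨(Fin.snoc s.1.1 (e.symm (k / 2)),
      Fin.snoc s.1.2 (forth hfin helem s.2 (e.symm (k / 2))).choose),
      (forth hfin helem s.2 (e.symm (k / 2))).choose_spec⟩
  else
    ⟨(Fin.snoc s.1.1 (back hfin helem s.2 (eN.symm (k / 2))).choose,
      Fin.snoc s.1.2 (eN.symm (k / 2))),
      (back hfin helem s.2 (eN.symm (k / 2))).choose_spec⟩

/-- The back-and-forth sequence of partial correspondences. -/
noncomputable def seqState (e : M ≃ ℕ) (eN : N ≃ ℕ) :
    ∀ k : ℕ, {p : (Fin k → M) × (Fin k → N) // ST L M N k p.1 p.2}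
  | 0 => ⟨((fun i => i.elim0), (fun i => i.elim0)), ST_zero helem _ _⟩
  | (k + 1) => nextState hfin helem e eN k (seqState e eN k)

/-- The `M`-side enumeration produced by back-and-forth. -/
noncomputable def seqA (e : M ≃ ℕ) (eN : N ≃ ℕ) (t : ℕ) : M :=
  (seqState hfin helem e eN (t + 1)).1.1 (Fin.last t)

/-- The `N`-side enumeration produced by back-and-forth. -/
noncomputable def seqB (e : M ≃ ℕ) (eN : N ≃ ℕ) (t : ℕ) : N :=
  (seqState hfin helem e eN (t + 1)).1.2 (Fin.last t)

include hfin helem in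
theorem seqState_succ_eq (e : M ≃ ℕ) (eN : N ≃ ℕ) (k : ℕ) :
    (seqState hfin helem e eN (k + 1)).1.1
        = Fin.snoc (seqState hfin helem e eN k).1.1 (seqA hfin helem e eN k) ∧
      (seqState hfin helem e eN (k + 1)).1.2
        = Fin.snoc (seqState hfin helem e eN k).1.2 (seqB hfin helem e eN k) := by
  have h : ∃ c d, (seqState hfin helem e eN (k + 1)).1.1
        = Fin.snoc (seqState hfin helem e eN k).1.1 c ∧
      (seqState hfin helem e eN (k + 1)).1.2
        = Fin.snoc (seqState hfin helem e eN k).1.2 d := by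
    rw [seqState]
    unfold nextState
    split
    · exact ⟨_, _, rfl, rfl⟩
    · exact ⟨_, _, rfl, rfl⟩
  obtain ⟨c, d, h1, h2⟩ := h
  have hc : seqA hfin helem e eN k = c := by rw [seqA, h1, Fin.snoc_last]
  have hd : seqB hfin helem e eN k = d := by rw [seqB, h2, Fin.snoc_last]
  rw [hc, hd]
  exact ⟨h1, h2⟩

include hfin helem in
theorem seqState_apply (e : M ≃ ℕ) (eN : N ≃ ℕ) : ∀ (k : ℕ) (i : Fin k),
    (seqState hfin helem e eN k).1.1 i = seqA hfin helem e eN i.1 ∧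
      (seqState hfin helem e eN k).1.2 i = seqB hfin helem e eN i.1 := by
  intro k
  induction k with
  | zero => exact fun i => i.elim0
  | succ k ih =>
    intro i
    refine Fin.lastCases ?_ ?_ i
    · exact ⟨rfl, rfl⟩
    · intro j
      obtain ⟨h1, h2⟩ := seqState_succ_eq hfin helem e eN k
      rw [h1, h2, Fin.snoc_castSucc, Fin.snoc_castSucc]
      exact ih j

include hfin helem in
theorem master (e : M ≃ ℕ) (eN : N ≃ ℕ) (k : ℕ) (χ : L.BoundedFormula Empty k) :
    χ.Realize default (fun i : Fin k => seqA hfin helem e eN i.1) ↔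
      χ.Realize default (fun i : Fin k => seqB hfin helem e eN i.1) := by
  have h := (seqState hfin helem e eN k).2 χ
  rwa [show (seqState hfin helem e eN k).1.1 = fun i : Fin k => seqA hfin helem e eN i.1 from
      funext fun i => (seqState_apply hfin helem e eN k i).1,
    show (seqState hfin helem e eN k).1.2 = fun i : Fin k => seqB hfin helem e eN i.1 from
      funext fun i => (seqState_apply hfin helem e eN k i).2] at h

include hfin helem in
theorem seqA_even (e : M ≃ ℕ) (eN : N ≃ ℕ) (t : ℕ) :
    seqA hfin helem e eN (2 * t) = e.symm t := by
  have h : seqA hfin helem e eN (2 * t)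
      = (seqState hfin helem e eN (2 * t + 1)).1.1 (Fin.last _) := rfl
  rw [h, seqState]
  unfold nextState
  rw [if_pos (by omega : 2 * t % 2 = 0)]
  show Fin.snoc (α := fun _ => M) ((seqState hfin helem e eN (2 * t)).1.1) (e.symm (2 * t / 2))
    (Fin.last (2 * t)) = e.symm t
  rw [Fin.snoc_last]
  exact congrArg e.symm (by omega)

include hfin helem in
theorem seqB_odd (e : M ≃ ℕ) (eN : N ≃ ℕ) (t : ℕ) :
    seqB hfin helem e eN (2 * t + 1) = eN.symm t := by
  have h : seqB hfin helem e eN (2 * t + 1)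
      = (seqState hfin helem e eN (2 * t + 1 + 1)).1.2 (Fin.last _) := rfl
  rw [h, seqState]
  unfold nextState
  rw [if_neg (by omega : ¬ (2 * t + 1) % 2 = 0)]
  show Fin.snoc (α := fun _ => N) ((seqState hfin helem e eN (2 * t + 1)).1.2) (eN.symm ((2 * t + 1) / 2))
    (Fin.last (2 * t + 1)) = eN.symm t
  rw [Fin.snoc_last]
  exact congrArg eN.symm (by omega)

include hfin helem in
theorem equiv_of_elem (e : M ≃ ℕ) (eN : N ≃ ℕ) : Nonempty (M ≃[L] N) := by
  classical
  set A := seqA hfin helem e eN with hA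
  set B := seqB hfin helem e eN with hB
  have hAcov : ∀ x : M, A (2 * e x) = x := fun x =>
    (seqA_even hfin helem e eN (e x)).trans (e.symm_apply_apply x)
  have hBcov : ∀ y : N, B (2 * eN y + 1) = y := fun y =>
    (seqB_odd hfin helem e eN (eN y)).trans (eN.symm_apply_apply y)
  have pair : ∀ i j : ℕ, A i = A j ↔ B i = B j := by
    intro i j
    have hi : i < max i j + 1 := by omega
    have hj : j < max i j + 1 := by omega
    have h := master hfin helem e eN (max i j + 1)
      (Term.bdEqual (Term.var (Sum.inr ⟨i, hi⟩)) (Term.var (Sum.inr ⟨j, hj⟩)))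
    simpa [BoundedFormula.realize_bdEqual, Term.realize] using h
  set g : M → N := fun x => B (2 * e x) with hg
  have hinj : Function.Injective g := by
    intro x y hxy
    have h := (pair (2 * e x) (2 * e y)).2 hxy
    rwa [hAcov x, hAcov y] at h
  have hsurj : Function.Surjective g := by
    intro y
    refine ⟨A (2 * eN y + 1), ?_⟩
    have h1 : A (2 * e (A (2 * eN y + 1))) = A (2 * eN y + 1) := hAcov _
    have h2 := (pair _ _).1 h1
    show B (2 * e (A (2 * eN y + 1))) = y
    rw [h2, hBcov y]
  refine ⟨⟨Equiv.ofBijective g ⟨hinj, hsurj⟩, ?_, ?_⟩⟩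
  · intro n f x
    show g (funMap f x) = funMap f (g ∘ x)
    have hx : ∀ i : Fin n,
        2 * e (x i) < 2 * (Finset.univ.sup (fun i : Fin n => e (x i)) + e (funMap f x)) + 1 := by
      intro i
      have h1 := Finset.le_sup (f := fun i : Fin n => e (x i)) (Finset.mem_univ i)
      have h2 : e (x i) ≤ Finset.univ.sup (fun i : Fin n => e (x i)) := h1
      omega
    have h0 : 2 * e (funMap f x)
        < 2 * (Finset.univ.sup (fun i : Fin n => e (x i)) + e (funMap f x)) + 1 := by omega
    have h := master hfin helem e eN _
      (Term.bdEqual (Term.func f (fun i => Term.var (Sum.inr ⟨2 * e (x i), hx i⟩)))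
        (Term.var (Sum.inr ⟨2 * e (funMap f x), h0⟩)))
    simp only [BoundedFormula.realize_bdEqual, Term.realize, Sum.elim_inr] at h
    rw [← hA, ← hB] at h
    have hL : funMap f (fun i => A (2 * e (x i))) = A (2 * e (funMap f x)) := by
      rw [hAcov]
      congr 1
      funext i
      rw [hAcov]
    calc g (funMap f x) = B (2 * e (funMap f x)) := rfl
      _ = funMap f (fun i => B (2 * e (x i))) := (h.1 hL).symm
      _ = funMap f (g ∘ x) := rfl
  · intro n r x
    show RelMap r (g ∘ x) ↔ RelMap r x
    have hx : ∀ i : Fin n,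
        2 * e (x i) < 2 * Finset.univ.sup (fun i : Fin n => e (x i)) + 1 := by
      intro i
      have h1 := Finset.le_sup (f := fun i : Fin n => e (x i)) (Finset.mem_univ i)
      have h2 : e (x i) ≤ Finset.univ.sup (fun i : Fin n => e (x i)) := h1
      omega
    have h := master hfin helem e eN _
      (r.boundedFormula (fun i => Term.var (Sum.inr ⟨2 * e (x i), hx i⟩)))
    simp only [BoundedFormula.realize_rel, Term.realize, Sum.elim_inr] at h
    rw [← hA, ← hB] at h
    have hxx : (fun i => A (2 * e (x i))) = x := funext fun i => hAcov (x i)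
    rw [hxx] at h
    have hgx : (fun i => B (2 * e (x i))) = g ∘ x := rfl
    rw [hgx] at h
    exact h.symm

end Transfer

end AZtmp



/-- If a countably infinite structure `M` has an
AZ-enumeration — an enumeration `e : M ≃ ℕ` (a linear ordering `≺` of type `ω`)
such that for every `n ≥ 1` and every sequence of `n`-tuples `b i` from `M`
there are `i < j` and a `≺`-preserving elementary self-embedding `f` of `M`
with `f (b i) = b j` — then `M` is `ω`-categorical, i.e. the complete theory
of `M` is `ℵ₀`-categorical. -/
theorem stmt7 {L : FirstOrder.Language} {M : Type} [L.Structure M]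
    [Countable M] [Infinite M] (e : M ≃ ℕ)
    (hAZ : ∀ n : ℕ, 1 ≤ n → ∀ b : ℕ → Fin n → M, ∃ i j : ℕ, i < j ∧
      ∃ f : M ↪ₑ[L] M, (∀ x y : M, e x < e y → e (f x) < e (f y)) ∧
        ∀ k : Fin n, f (b i k) = b j k) :
    Cardinal.aleph0.Categorical (L.completeTheory M) := by
  intro N₁ N₂ h₁ h₂
  obtain ⟨dN₁⟩ := Cardinal.denumerable_iff.2 h₁
  obtain ⟨dN₂⟩ := Cardinal.denumerable_iff.2 h₂
  have eN₁ : (N₁ : Type _) ≃ ℕ := dN₁.eqv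
  have eN₂ : (N₂ : Type _) ≃ ℕ := dN₂.eqv
  have hfin := AZtmp.typ_finite e hAZ
  have helem : ∀ (X : Type _) [L.Structure X], X ⊨ L.completeTheory M →
      ∀ σ : L.Sentence, M ⊨ σ ↔ X ⊨ σ := by
    intro X _ hX σ
    haveI := hX
    constructor
    · intro h
      exact (L.completeTheory M).realize_sentence_of_mem (Language.mem_completeTheory.2 h)
    · intro h
      by_contra hM
      have h2 : M ⊨ σ.not := (Language.Sentence.realize_not M).2 hM
      have h3 : X ⊨ σ.not :=
        (L.completeTheory M).realize_sentence_of_mem (Language.mem_completeTheory.2 h2)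
      exact (Language.Sentence.realize_not X).1 h3 h
  obtain ⟨i₁⟩ := AZtmp.equiv_of_elem hfin (helem N₁ N₁.is_model) e eN₁
  obtain ⟨i₂⟩ := AZtmp.equiv_of_elem hfin (helem N₂ N₂.is_model) e eN₂
  exact ⟨i₂.comp i₁.symm⟩
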